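/- Suppose ΔQ_t = ω_t·δ_t + (1-ω_t)·g_t where ω_t ∈ [ω_min, 1] with ω_min > 0, δ_t = c - Q_t (a fixed-point TD-error toward target c), |g_t| ≤ G, and Q_{t+1} = Q_t + α·ΔQ_t with α ∈ (0,1]. Then limsup_t |Q_t - c| ≤ G·(1-ω_min)/ω_min. -/

import Mathlib

open Filter

/-- scalar CADENT model: with trust bounded below by ω_min > 0,
bounded teacher guidance |g_t| ≤ G, and δ_t = c - Q_t, the iterates satisfy
limsup |Q_t - c| ≤ G (1 - ω_min)/ω_min. -/
theorem stmt_15 (α c G ωmin : ℝ) (hα0 : 0 < α) (hα1 : α ≤ 1)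
    (hωmin : 0 < ωmin) (hG : 0 ≤ G)
    (ω g : ℕ → ℝ) (hω : ∀ t, ωmin ≤ ω t ∧ ω t ≤ 1) (hg : ∀ t, |g t| ≤ G)
    (Q : ℕ → ℝ)
    (hQ : ∀ t, Q (t + 1) = Q t + α * (ω t * (c - Q t) + (1 - ω t) * g t)) :
    limsup (fun t => |Q t - c|) atTop ≤ G * (1 - ωmin) / ωmin := by
  have hω1 : ωmin ≤ 1 := le_trans (hω 0).1 (hω 0).2
  set B : ℝ := G * (1 - ωmin) / ωmin with hB
  set r : ℝ := 1 - α * ωmin with hr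
  have hr0 : 0 ≤ r := by
    have : α * ωmin ≤ 1 := by nlinarith
    linarith
  have hr1 : r < 1 := by nlinarith
  set M : ℝ := max (|Q 0 - c| - B) 0 with hM
  have hM0 : 0 ≤ M := le_max_right _ _
  have hBω : ωmin * B = G * (1 - ωmin) := by
    rw [hB, mul_div_assoc']; exact mul_div_cancel_left₀ _ hωmin.ne'
  have key : ∀ t, |Q t - c| ≤ B + r ^ t * M := by
    intro t
    induction t with
    | zero => simp [hM]; cases le_total (|Q 0 - c| - B) 0 with
      | inl h => have := le_max_right (|Q 0 - c| - B) (0:ℝ); linarith [le_max_left (|Q 0 - c| - B) (0:ℝ)]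
      | inr h => linarith [le_max_left (|Q 0 - c| - B) (0:ℝ)]
    | succ t ih =>
      have hωt := hω t
      have hgt := hg t
      have hstep : Q (t+1) - c = (1 - α * ω t) * (Q t - c) + α * (1 - ω t) * g t := by
        rw [hQ t]; ring
      have h1 : 0 ≤ 1 - α * ω t := by nlinarith [hωt.1, hωt.2]
      have habs : |Q (t+1) - c| ≤ (1 - α * ω t) * |Q t - c| + α * (1 - ω t) * |g t| := by
        rw [hstep]
        calc |(1 - α * ω t) * (Q t - c) + α * (1 - ω t) * g t|
            ≤ |(1 - α * ω t) * (Q t - c)| + |α * (1 - ω t) * g t| := abs_add_le _ _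
          _ = (1 - α * ω t) * |Q t - c| + α * (1 - ω t) * |g t| := by
              rw [abs_mul, abs_mul, abs_mul, abs_of_nonneg h1, abs_of_nonneg hα0.le,
                abs_of_nonneg (by linarith [hωt.2] : (0:ℝ) ≤ 1 - ω t)]
      have h2 : (1 - α * ω t) * |Q t - c| + α * (1 - ω t) * |g t|
          ≤ r * |Q t - c| + α * (1 - ωmin) * G := by
        have hq0 : 0 ≤ |Q t - c| := abs_nonneg _
        have : (1 - α * ω t) ≤ r := by
          have := hωt.1; nlinarith
        have h3 : α * (1 - ω t) * |g t| ≤ α * (1 - ωmin) * G := by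
          have h4 : 0 ≤ 1 - ω t := by linarith [hωt.2]
          have h5 : (1 - ω t) ≤ (1 - ωmin) := by linarith [hωt.1]
          have h6 : 0 ≤ |g t| := abs_nonneg _
          have h7 : (1 - ω t) * |g t| ≤ (1 - ωmin) * G :=
            mul_le_mul h5 hgt h6 (by linarith)
          calc α * (1 - ω t) * |g t| = α * ((1 - ω t) * |g t|) := by ring
            _ ≤ α * ((1 - ωmin) * G) := by
                exact mul_le_mul_of_nonneg_left h7 hα0.le
            _ = α * (1 - ωmin) * G := by ring
        nlinarith
      have h7 : r * |Q t - c| + α * (1 - ωmin) * G ≤ r * (B + r ^ t * M) + α * (1 - ωmin) * G := by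
        nlinarith
      have hrB : r * B + α * (1 - ωmin) * G = B := by
        rw [hr]; linear_combination (-α) * hBω
      have h8 : r * (B + r ^ t * M) + α * (1 - ωmin) * G = B + r ^ (t+1) * M := by
        rw [pow_succ]; linear_combination hrB
      linarith
  have htend : Tendsto (fun t => B + r ^ t * M) atTop (nhds B) := by
    have : Tendsto (fun t : ℕ => r ^ t) atTop (nhds 0) :=
      tendsto_pow_atTop_nhds_zero_of_lt_one hr0 hr1
    have := (this.mul_const M).const_add B
    simpa using this
  have hlimsup_g : limsup (fun t => B + r ^ t * M) atTop = B := htend.limsup_eq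
  calc limsup (fun t => |Q t - c|) atTop
      ≤ limsup (fun t => B + r ^ t * M) atTop := by
        exact limsup_le_limsup (Eventually.of_forall key)
          (isCoboundedUnder_le_of_le atTop fun t => abs_nonneg _)
          htend.isBoundedUnder_le
    _ = B := hlimsup_g
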